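/- Let r > 0 and let x be a sequence in a normed linear space X. Then x is rough I-statistically convergent to ξ with degree r if and only if there exists a sequence y in X such that y is I-statistically convergent to ξ and ‖x_k − y_k‖ ≤ r for all k ∈ ℕ. -/

import Mathlib

open scoped Classical

/-- `I` is a nontrivial admissible ideal on `ℕ`. -/
def IsAdmissibleIdeal (I : Set (Set ℕ)) : Prop :=
  (∅ : Set ℕ) ∈ I ∧ (Set.univ : Set ℕ) ∉ I ∧
  (∀ A B : Set ℕ, A ∈ I → B ∈ I → A ∪ B ∈ I) ∧
  (∀ A B : Set ℕ, A ∈ I → B ⊆ A → B ∈ I) ∧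
  (∀ n : ℕ, ({n} : Set ℕ) ∈ I)

/-- `(1/n) * |{k ≤ n : P k}|` (indices `k` running over `1,…,n`). -/
noncomputable def stCount (P : ℕ → Prop) (n : ℕ) : ℝ :=
  ((Finset.Icc 1 n).filter P).card / n

/-- `I`-convergence of a real sequence `a` to `L`. -/
def ITendsto (I : Set (Set ℕ)) (a : ℕ → ℝ) (L : ℝ) : Prop :=
  ∀ ε : ℝ, 0 < ε → {n : ℕ | ε ≤ |a n - L|} ∈ I

/-- `ξ` is a rough `I`-statistical limit of `x` with roughness degree `r`
(the `δ` formulation). -/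
def RoughIStatLim {X : Type*} [NormedAddCommGroup X] (I : Set (Set ℕ))
    (x : ℕ → X) (r : ℝ) (ξ : X) : Prop :=
  ∀ ε : ℝ, 0 < ε → ∀ δ : ℝ, 0 < δ →
    {n : ℕ | δ ≤ stCount (fun k => r + ε ≤ ‖x k - ξ‖) n} ∈ I

/-- `ξ` is a rough `I`-statistical limit of `x` with roughness degree `r`
(the `I`-density formulation). -/
def RoughIStatLim' {X : Type*} [NormedAddCommGroup X] (I : Set (Set ℕ))
    (x : ℕ → X) (r : ℝ) (ξ : X) : Prop :=
  ∀ ε : ℝ, 0 < ε → ITendsto I (stCount (fun k => r + ε ≤ ‖x k - ξ‖)) 0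

/-- `x` is `I`-statistically convergent to `ξ`. -/
def IStatConv {X : Type*} [NormedAddCommGroup X] (I : Set (Set ℕ))
    (x : ℕ → X) (ξ : X) : Prop :=
  ∀ ε : ℝ, 0 < ε → ∀ δ : ℝ, 0 < δ →
    {n : ℕ | δ ≤ stCount (fun k => ε ≤ ‖x k - ξ‖) n} ∈ I

/-- `c` is an `I`-statistical cluster point of `x`. -/
def IStatClusterPt {X : Type*} [NormedAddCommGroup X] (I : Set (Set ℕ))
    (x : ℕ → X) (c : X) : Prop :=
  ∀ ε : ℝ, 0 < ε → ¬ ITendsto I (stCount (fun k => ‖x k - c‖ < ε)) 0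

/-- `x` is `I`-statistically bounded. -/
def IStatBounded {X : Type*} [NormedAddCommGroup X] (I : Set (Set ℕ))
    (x : ℕ → X) : Prop :=
  ∃ G : ℝ, 0 < G ∧ ∀ δ : ℝ, 0 < δ →
    {n : ℕ | δ ≤ stCount (fun k => G ≤ ‖x k‖) n} ∈ I


lemma stCount_mono_aux {P Q : ℕ → Prop} (h : ∀ k, P k → Q k) (n : ℕ) :
    stCount P n ≤ stCount Q n := by
  unfold stCount
  gcongr
  exact h _

theorem stmt_6 {X : Type*} [NormedAddCommGroup X] [NormedSpace ℝ X]
    (I : Set (Set ℕ)) (hI : IsAdmissibleIdeal I) (x : ℕ → X) (r : ℝ) (hr : 0 < r)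
    (ξ : X) :
    RoughIStatLim I x r ξ ↔
      ∃ y : ℕ → X, IStatConv I y ξ ∧ ∀ k : ℕ, ‖x k - y k‖ ≤ r := by
  obtain ⟨-, -, -, hsub, -⟩ := hI
  constructor
  · intro hx
    set d : ℕ → ℝ := fun k => ‖x k - ξ‖ with hd
    set y : ℕ → X := fun k => if d k ≤ r then ξ else x k + (r / d k) • (ξ - x k) with hy
    have hkey : ∀ k : ℕ, ‖x k - y k‖ ≤ r ∧ ∀ ε : ℝ, 0 < ε → (ε ≤ ‖y k - ξ‖ → r + ε ≤ ‖x k - ξ‖) := by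
      intro k
      by_cases hc : d k ≤ r
      · constructor
        · simp [hy, hc]
          exact hc
        · intro ε hε hεle
          simp [hy, hc] at hεle
          linarith
      · push_neg at hc
        have hdpos : 0 < d k := lt_trans hr hc
        have hxky : x k - y k = (r / d k) • (x k - ξ) := by
          simp only [hy, if_neg (not_le.mpr hc)]
          module
        have hykξ : y k - ξ = (1 - r / d k) • (x k - ξ) := by
          simp only [hy, if_neg (not_le.mpr hc)]
          module
        constructor
        · rw [hxky, norm_smul]
          have : ‖(r / d k : ℝ)‖ = r / d k := by
            rw [Real.norm_eq_abs, abs_of_pos (div_pos hr hdpos)]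
          rw [this]
          have : ‖x k - ξ‖ = d k := rfl
          rw [this, div_mul_cancel₀ _ (ne_of_gt hdpos)]
        · intro ε hε hεle
          rw [hykξ, norm_smul, Real.norm_eq_abs] at hεle
          have h1 : |1 - r / d k| = 1 - r / d k := by
            rw [abs_of_nonneg]
            have := (div_lt_one hdpos).mpr hc
            linarith
          rw [h1] at hεle
          have : ‖x k - ξ‖ = d k := rfl
          rw [this] at hεle
          have : (1 - r / d k) * d k = d k - r := by
            field_simp
          rw [this] at hεle
          show r + ε ≤ d k
          linarith
    refine ⟨y, ?_, fun k => (hkey k).1⟩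
    intro ε hε δ hδ
    refine hsub _ _ (hx ε hε δ hδ) ?_
    intro n hn
    simp only [Set.mem_setOf_eq] at hn ⊢
    exact le_trans hn (stCount_mono_aux (fun k hk => (hkey k).2 ε hε hk) n)
  · rintro ⟨y, hy, hnear⟩
    intro ε hε δ hδ
    refine hsub _ _ (hy ε hε δ hδ) ?_
    intro n hn
    simp only [Set.mem_setOf_eq] at hn ⊢
    refine le_trans hn (stCount_mono_aux ?_ n)
    intro k hk
    have h1 := dist_triangle (x k) (y k) ξ
    simp only [dist_eq_norm] at h1
    linarith [hnear k]
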